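/- Let G_D = ([m], E_D) be a graph, M ⊆ E_D a matching, and G^M the homomorphic graph obtained by splitting each matched vertex i into two adjacent vertices i↑, i↓ (with each of i↑, i↓ adjacent to all vertices, split or not, that arose from neighbors of i in G_D). Assign weights p^M by p^M_{i↑} = p'_i, p^M_{i↓} = p⁻_i − p'_i for matched i, and p^M_i = p⁻_i for unmatched i, where p'_i ≤ p⁻_i. Then the sum over all single-sink witness DAGs D' of G^M of Π_{v' ∈ D'} p^M_{L'(v')} equals the sum over all single-sink witness DAGs D of G_D of Π_{v ∈ D} p⁻_{L(v)}. -/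

import Mathlib

open scoped Classical ENNReal

/-- A (labelled) proper witness DAG of a graph `G`: a finite DAG on `Fin n` with node
labels in the vertices of `G`, such that two distinct nodes are joined by an arc (in some
direction) iff their labels are equal or adjacent in `G`, and with a unique sink. -/
structure PWdag {α : Type} (G : SimpleGraph α) where
  n : ℕ
  arc : Fin n → Fin n → Prop
  lab : Fin n → α
  acyclic : ∀ v, ¬ Relation.TransGen arc v v
  cond : ∀ v v', v ≠ v' → ((arc v v' ∨ arc v' v) ↔ (lab v = lab v' ∨ G.Adj (lab v) (lab v')))
  single_sink : ∃! v, ∀ u, ¬ arc v u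

/-- The weight Π_{v ∈ D} p(L(v)) of a witness DAG. -/
noncomputable def PWdag.weight {α : Type} {G : SimpleGraph α} (p : α → ℝ≥0∞)
    (D : PWdag G) : ℝ≥0∞ :=
  ∏ v : Fin D.n, p (D.lab v)

/-- A vertex is matched by the matching `M`. -/
def Matched {m : ℕ} (M : Finset (Fin m × Fin m)) (i : Fin m) : Prop :=
  ∃ j, (i, j) ∈ M ∨ (j, i) ∈ M

/-- The base vertex in `Fin m` of a vertex of the split graph: `Sum.inl i` stands for
`i` (or `i↑` if `i` is matched) and `Sum.inr i` stands for `i↓` (for matched `i`). -/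
def base {m : ℕ} : Fin m ⊕ Fin m → Fin m := Sum.elim id id

/-- The homomorphic graph `G^M`: each matched vertex `i` is split into two adjacent copies
`i↑ = Sum.inl i` and `i↓ = Sum.inr i`, and copies of (equal or) adjacent base vertices are
adjacent.  (Vertices `Sum.inr i` for unmatched `i` are isolated and carry weight `0`.) -/
def splitGraph {m : ℕ} (G : SimpleGraph (Fin m)) (M : Finset (Fin m × Fin m)) :
    SimpleGraph (Fin m ⊕ Fin m) :=
  SimpleGraph.fromRel (fun x y =>
    (Matched M (base x) ∨ ∃ i, x = Sum.inl i) ∧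
    (Matched M (base y) ∨ ∃ i, y = Sum.inl i) ∧
    (G.Adj (base x) (base y) ∨ base x = base y))

/-- The weights on `G^M`: `p^M_{i↑} = p'_i`, `p^M_{i↓} = p⁻_i − p'_i` for matched `i`,
and `p^M_i = p⁻_i` for unmatched `i`. -/
noncomputable def pM {m : ℕ} (M : Finset (Fin m × Fin m)) (p' pminus : Fin m → ℝ≥0∞) :
    Fin m ⊕ Fin m → ℝ≥0∞ :=
  Sum.elim (fun i => if Matched M i then p' i else pminus i)
           (fun i => if Matched M i then pminus i - p' i else 0)

/-! ### Auxiliary development -/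

section Aux

variable {m : ℕ} (G : SimpleGraph (Fin m)) (M : Finset (Fin m × Fin m))

/-- A vertex of the split graph is "good" if it is a top copy or its base is matched. -/
def GoodV (x : Fin m ⊕ Fin m) : Prop :=
  Matched M (base x) ∨ ∃ i, x = Sum.inl i

lemma PWdag.ext' {α : Type} {G : SimpleGraph α} {D E : PWdag G}
    (hn : D.n = E.n) (harc : HEq D.arc E.arc) (hlab : HEq D.lab E.lab) : D = E := by
  cases D; cases E
  cases hn
  cases harc
  cases hlab
  rfl

lemma key_adj (x y : Fin m ⊕ Fin m) (hx : GoodV M x) (hy : GoodV M y) :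
    (x = y ∨ (splitGraph G M).Adj x y) ↔
      (base x = base y ∨ G.Adj (base x) (base y)) := by
  rw [splitGraph, SimpleGraph.fromRel_adj]
  constructor
  · rintro (rfl | ⟨hne, ⟨_, _, (h | h)⟩ | ⟨_, _, (h | h)⟩⟩)
    · exact Or.inl rfl
    · exact Or.inr h
    · exact Or.inl h
    · exact Or.inr h.symm
    · exact Or.inl h.symm
  · rintro (hb | hadj)
    · by_cases hxy : x = y
      · exact Or.inl hxy
      · exact Or.inr ⟨hxy, Or.inl ⟨hx, hy, Or.inr hb⟩⟩
    · refine Or.inr ⟨?_, Or.inl ⟨hx, hy, Or.inl hadj⟩⟩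
      rintro rfl
      exact G.irrefl hadj

/-- A witness DAG of the split graph is good if all its labels are good vertices. -/
def GoodD (D' : PWdag (splitGraph G M)) : Prop := ∀ v, GoodV M (D'.lab v)

lemma weight_eq_zero_of_not_goodD (p' pminus : Fin m → ℝ≥0∞)
    {D' : PWdag (splitGraph G M)} (h : ¬ GoodD G M D') :
    D'.weight (pM M p' pminus) = 0 := by
  rw [GoodD] at h
  push_neg at h
  obtain ⟨v, hv⟩ := h
  rw [PWdag.weight]
  apply Finset.prod_eq_zero (Finset.mem_univ v)
  rcases hlab : D'.lab v with i | i
  · exact absurd (Or.inr ⟨i, hlab⟩) hv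
  · have hni : ¬ Matched M i := fun hmi => hv (Or.inl (by rw [hlab]; exact hmi))
    simp [pM, hni]

/-- Decode: relabel a good witness DAG of the split graph by base labels. -/
noncomputable def decodePW (D' : PWdag (splitGraph G M)) (hD' : GoodD G M D') : PWdag G where
  n := D'.n
  arc := D'.arc
  lab := fun v => base (D'.lab v)
  acyclic := D'.acyclic
  cond := fun v v' hne => by
    rw [D'.cond v v' hne]
    have := key_adj G M (D'.lab v) (D'.lab v') (hD' v) (hD' v')
    constructor
    · rintro (h | h)
      · exact (this.mp (Or.inl h))
      · exact (this.mp (Or.inr h))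
    · intro h
      rcases this.mpr h with h' | h'
      · exact Or.inl h'
      · exact Or.inr h'
  single_sink := D'.single_sink

/-- Encode: given a witness DAG of `G` and an up/down choice at matched nodes, produce a
witness DAG of the split graph. -/
noncomputable def encodeLab (D : PWdag G) (R : {v : Fin D.n // Matched M (D.lab v)} → Bool)
    (v : Fin D.n) : Fin m ⊕ Fin m :=
  if h : Matched M (D.lab v) then
    (if R ⟨v, h⟩ then Sum.inl (D.lab v) else Sum.inr (D.lab v))
  else Sum.inl (D.lab v)

lemma base_encodeLab (D : PWdag G) (R : {v : Fin D.n // Matched M (D.lab v)} → Bool)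
    (v : Fin D.n) : base (encodeLab G M D R v) = D.lab v := by
  rw [encodeLab]
  split_ifs <;> rfl

lemma goodV_encodeLab (D : PWdag G) (R : {v : Fin D.n // Matched M (D.lab v)} → Bool)
    (v : Fin D.n) : GoodV M (encodeLab G M D R v) := by
  rw [encodeLab, GoodV]
  split_ifs with h h'
  · exact Or.inr ⟨_, rfl⟩
  · exact Or.inl (by simpa [base] using h)
  · exact Or.inr ⟨_, rfl⟩

noncomputable def encodePW (D : PWdag G) (R : {v : Fin D.n // Matched M (D.lab v)} → Bool) :
    PWdag (splitGraph G M) where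
  n := D.n
  arc := D.arc
  lab := encodeLab G M D R
  acyclic := D.acyclic
  cond := fun v v' hne => by
    rw [D.cond v v' hne]
    have := key_adj G M (encodeLab G M D R v) (encodeLab G M D R v')
      (goodV_encodeLab G M D R v) (goodV_encodeLab G M D R v')
    rw [base_encodeLab, base_encodeLab] at this
    constructor
    · intro h
      rcases this.mpr h with h' | h'
      · exact Or.inl h'
      · exact Or.inr h'
    · rintro (h | h)
      · exact this.mp (Or.inl h)
      · exact this.mp (Or.inr h)
  single_sink := D.single_sink

lemma goodD_encodePW (D : PWdag G) (R : {v : Fin D.n // Matched M (D.lab v)} → Bool) :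
    GoodD G M (encodePW G M D R) := fun v => goodV_encodeLab G M D R v

lemma decode_encode (D : PWdag G) (R : {v : Fin D.n // Matched M (D.lab v)} → Bool) :
    decodePW G M (encodePW G M D R) (goodD_encodePW G M D R) = D := by
  refine PWdag.ext' rfl HEq.rfl (heq_of_eq (funext fun v => ?_))
  exact base_encodeLab G M D R v

lemma sigma_helper {D E : PWdag G}
    (h : D = E)
    (R : {v : Fin D.n // Matched M (D.lab v)} → Bool)
    (R' : {v : Fin E.n // Matched M (E.lab v)} → Bool)
    (hR : ∀ (v : Fin D.n) (hv : Matched M (D.lab v)) (w : Fin E.n)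
      (hw : Matched M (E.lab w)), (v : ℕ) = (w : ℕ) → R ⟨v, hv⟩ = R' ⟨w, hw⟩) :
    (⟨D, R⟩ : Σ D : PWdag G, ({v : Fin D.n // Matched M (D.lab v)} → Bool)) = ⟨E, R'⟩ := by
  subst h
  congr 1
  funext x
  exact hR x.1 x.2 x.1 x.2 rfl

/-- The equivalence between good witness DAGs of the split graph and pairs `(D, R)`. -/
noncomputable def goodEquiv :
    {D' : PWdag (splitGraph G M) // GoodD G M D'} ≃
      Σ D : PWdag G, ({v : Fin D.n // Matched M (D.lab v)} → Bool) where
  toFun D' := ⟨decodePW G M D'.1 D'.2, fun v => (D'.1.lab v.1).isLeft⟩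
  invFun x := ⟨encodePW G M x.1 x.2, goodD_encodePW G M x.1 x.2⟩
  left_inv := by
    rintro ⟨D', hD'⟩
    refine Subtype.ext (PWdag.ext' rfl HEq.rfl (heq_of_eq (funext fun v => ?_)))
    show encodeLab G M _ _ v = D'.lab v
    unfold encodeLab
    rcases hlab : D'.lab v with i | i
    · split_ifs with h h' <;> simp_all [decodePW, base]
    · have hmi : Matched M i := by
        rcases hD' v with h | ⟨j, hj⟩
        · rwa [hlab] at h
        · rw [hlab] at hj; exact absurd hj (by simp)
      split_ifs with h h' <;> simp_all [decodePW, base]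
  right_inv := by
    rintro ⟨D, R⟩
    refine sigma_helper G M (decode_encode G M D R) _ R ?_
    intro v hv w hw hvw
    have hvw' : v = w := Fin.val_injective hvw
    subst hvw'
    show (encodeLab G M D R v).isLeft = R ⟨v, hw⟩
    unfold encodeLab
    rw [dif_pos hw]
    by_cases hR : R ⟨v, hw⟩ <;> simp [hR]

end Aux

theorem stmt9 {m : ℕ} (G : SimpleGraph (Fin m)) (M : Finset (Fin m × Fin m))
    (hM_edge : ∀ e ∈ M, G.Adj e.1 e.2)
    (hM_match : ∀ e ∈ M, ∀ f ∈ M, e ≠ f →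
      e.1 ≠ f.1 ∧ e.1 ≠ f.2 ∧ e.2 ≠ f.1 ∧ e.2 ≠ f.2)
    (p' pminus : Fin m → ℝ≥0∞) (hle : ∀ i, p' i ≤ pminus i) :
    ∑' D' : PWdag (splitGraph G M), D'.weight (pM M p' pminus) =
      ∑' D : PWdag G, D.weight pminus := by
  -- restrict to good witness DAGs
  have h1 : ∑' D' : {D' : PWdag (splitGraph G M) // GoodD G M D'},
      (D' : PWdag (splitGraph G M)).weight (pM M p' pminus)
      = ∑' D' : PWdag (splitGraph G M), D'.weight (pM M p' pminus) := by
    apply tsum_subtype_eq_of_support_subset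
    intro D' hD'
    by_contra h
    exact hD' (weight_eq_zero_of_not_goodD G M p' pminus h)
  rw [← h1, ← (goodEquiv G M).symm.tsum_eq, ENNReal.tsum_sigma']
  refine tsum_congr fun D => ?_
  -- now compute the inner sum over R
  have hinner : ∀ R : {v : Fin D.n // Matched M (D.lab v)} → Bool,
      ((goodEquiv G M).symm ⟨D, R⟩ : PWdag (splitGraph G M)).weight (pM M p' pminus)
      = (∏ v : {v : Fin D.n // Matched M (D.lab v)},
          (if R v then p' (D.lab v.1) else pminus (D.lab v.1) - p' (D.lab v.1)))
        * ∏ v : {v : Fin D.n // ¬ Matched M (D.lab v)}, pminus (D.lab v.1) := by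
    intro R
    show (∏ v : Fin D.n, pM M p' pminus (encodeLab G M D R v)) = _
    rw [← Fintype.prod_subtype_mul_prod_subtype (fun v : Fin D.n => Matched M (D.lab v))
      (fun v => pM M p' pminus (encodeLab G M D R v))]
    congr 1
    · refine Finset.prod_congr rfl fun v _ => ?_
      show pM M p' pminus (encodeLab G M D R v.1) = _
      rw [encodeLab, dif_pos v.2]
      by_cases hR : R v
      · rw [if_pos (by rwa [Subtype.coe_eta]), hR, if_pos rfl]
        simp [pM, v.2]
      · rw [if_neg (by rwa [Subtype.coe_eta]), if_neg hR]
        simp [pM, v.2]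
    · refine Finset.prod_congr rfl fun v _ => ?_
      show pM M p' pminus (encodeLab G M D R v.1) = _
      rw [encodeLab, dif_neg v.2]
      simp [pM, v.2]
  rw [tsum_fintype]
  calc ∑ R : {v : Fin D.n // Matched M (D.lab v)} → Bool,
        ((goodEquiv G M).symm ⟨D, R⟩ : PWdag (splitGraph G M)).weight (pM M p' pminus)
      = (∑ R : {v : Fin D.n // Matched M (D.lab v)} → Bool,
          ∏ v : {v : Fin D.n // Matched M (D.lab v)},
            (if R v then p' (D.lab v.1) else pminus (D.lab v.1) - p' (D.lab v.1)))
        * ∏ v : {v : Fin D.n // ¬ Matched M (D.lab v)}, pminus (D.lab v.1) := by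
        rw [Finset.sum_mul]
        exact Finset.sum_congr rfl fun R _ => hinner R
    _ = (∏ v : {v : Fin D.n // Matched M (D.lab v)}, pminus (D.lab v.1))
        * ∏ v : {v : Fin D.n // ¬ Matched M (D.lab v)}, pminus (D.lab v.1) := by
        congr 1
        have key := Finset.prod_univ_sum
          (fun _ : {v : Fin D.n // Matched M (D.lab v)} => (Finset.univ : Finset Bool))
          (fun v b => if b then p' (D.lab v.1) else pminus (D.lab v.1) - p' (D.lab v.1))
        rw [Fintype.piFinset_univ] at key
        rw [← key]
        refine Finset.prod_congr rfl fun v _ => ?_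
        rw [Fintype.sum_bool, if_pos rfl, if_neg (by simp), add_tsub_cancel_of_le (hle _)]
    _ = D.weight pminus := by
        rw [PWdag.weight]
        exact Fintype.prod_subtype_mul_prod_subtype (fun v : Fin D.n => Matched M (D.lab v))
          (fun v => pminus (D.lab v))
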